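/- Let Σ be a neighborhood of 0 in C, n a positive integer, κ ∈ C, and let σ(z) = z + (κ/n)z^{n+1} + O(z^{n+2}) be analytic with σ(0) = 0, σ'(0) = 1. Then on a possibly smaller neighborhood, the 1-form (z^{-1} + κz^{n-1})dz equals (σ^{-1} + O(σⁿ))dσ; consequently the inverse coordinate change φ = σ^{-1} pulls back any 1-form of the shape Az^{-1}dz + κA z^{n-1}dz + O(zⁿ)dz to Aw^{-1}dw + O(wⁿ)dw. -/

import Mathlib

open Matrix Metric

set_option maxHeartbeats 1000000 in
/-- **Coordinate change.**  If `σ(z) = z + (κ/n)z^{n+1} + O(z^{n+2})` with `σ(0) = 0`,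
`σ'(0) = 1`, then near `0` one has `(z⁻¹ + κ z^{n-1})dz = (σ⁻¹ + O(σⁿ))dσ`; consequently the
inverse coordinate change `φ = σ⁻¹` pulls back any `1`-form
`A z⁻¹ dz + κ A z^{n-1} dz + O(zⁿ)dz` to `A w⁻¹ dw + O(wⁿ)dw`. -/
theorem stmt11 (n : ℕ) (hn : 0 < n) (κ : ℂ) (U : Set ℂ) (hU : U ∈ nhds (0 : ℂ))
    (σ : ℂ → ℂ) (hσa : AnalyticOnNhd ℂ σ U) (hσ0 : σ 0 = 0) (hσ'0 : deriv σ 0 = 1)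
    (τ : ℂ → ℂ) (hτ : AnalyticOnNhd ℂ τ U)
    (hexp : ∀ z ∈ U, σ z = z + (κ / n) * z ^ (n + 1) + z ^ (n + 2) * τ z)
    (φ : ℂ → ℂ) (V : Set ℂ) (hV : V ∈ nhds (0 : ℂ)) (hφa : AnalyticOnNhd ℂ φ V)
    (hφ0 : φ 0 = 0) (hinv : ∀ w ∈ V, σ (φ w) = w) :
    (∃ W ∈ nhds (0 : ℂ), ∃ g : ℂ → ℂ, AnalyticOnNhd ℂ g W ∧
      ∀ z ∈ W, z ≠ 0 →
        z⁻¹ + κ * z ^ (n - 1) = ((σ z)⁻¹ + g z * σ z ^ n) * deriv σ z) ∧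
    ∀ (A : Matrix (Fin 2) (Fin 2) ℂ) (E : ℂ → Matrix (Fin 2) (Fin 2) ℂ),
      (∀ i j, AnalyticOnNhd ℂ (fun z => E z i j) U) →
      ∃ W ∈ nhds (0 : ℂ), ∃ Fr : ℂ → Matrix (Fin 2) (Fin 2) ℂ,
        (∀ i j, AnalyticOnNhd ℂ (fun w => Fr w i j) W) ∧
        ∀ w ∈ W, w ≠ 0 →
          deriv φ w • (((φ w)⁻¹ + κ * φ w ^ (n - 1)) • A + φ w ^ n • E (φ w)) =
            w⁻¹ • A + w ^ n • Fr w := by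
  obtain ⟨m, rfl⟩ := Nat.exists_eq_succ_of_ne_zero hn.ne'
  simp only [Nat.succ_eq_add_one, Nat.add_sub_cancel] at hexp ⊢
  have hnc : ((m : ℂ) + 1) ≠ 0 := Nat.cast_add_one_ne_zero m
  obtain ⟨r, hr0, hrU⟩ := Metric.mem_nhds_iff.mp hU
  have hBopen : IsOpen (ball (0:ℂ) r) := isOpen_ball
  have hB0 : (0:ℂ) ∈ ball (0:ℂ) r := mem_ball_self hr0
  have hτB : AnalyticOnNhd ℂ τ (ball (0:ℂ) r) := hτ.mono hrU
  have hτ' : AnalyticOnNhd ℂ (deriv τ) (ball (0:ℂ) r) := hτB.deriv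
  obtain ⟨c, hc⟩ : ∃ c : ℂ, c = κ / ((m:ℂ) + 1) := ⟨_, rfl⟩
  obtain ⟨u, hu⟩ : ∃ u : ℂ → ℂ, u = fun z => 1 + c * z ^ (m+1) + z ^ (m+2) * τ z := ⟨_, rfl⟩
  obtain ⟨D, hDdef⟩ : ∃ D : ℂ → ℂ, D = fun z =>
    1 + c * ((m:ℂ)+2) * z ^ (m+1) + ((m:ℂ)+3) * z ^ (m+2) * τ z + z ^ (m+3) * deriv τ z :=
    ⟨_, rfl⟩
  obtain ⟨M, hM⟩ : ∃ M : ℂ → ℂ, M = fun z =>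
    -((m:ℂ)+2) * τ z - z * deriv τ z + c * κ * z ^ m + κ * z ^ (m+1) * τ z := ⟨_, rfl⟩
  obtain ⟨g, hg⟩ : ∃ g : ℂ → ℂ, g = fun z => M z / (u z ^ (m+2) * D z) := ⟨_, rfl⟩
  have hexp' : ∀ z ∈ ball (0:ℂ) r, σ z = z + c * z ^ (m+2) + z ^ (m+3) * τ z := by
    intro z hz
    rw [hexp z (hrU hz), hc]
    push_cast
    ring
  have hσeq : ∀ z ∈ ball (0:ℂ) r, σ z = z * u z := by
    intro z hz
    rw [hexp' z hz, hu]
    ring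
  have hσD : ∀ z ∈ ball (0:ℂ) r, HasDerivAt σ (D z) z := by
    intro z hz
    have h1 : HasDerivAt (fun z : ℂ => z) 1 z := hasDerivAt_id z
    have h2 : HasDerivAt (fun z : ℂ => c * z ^ (m+2)) (c * (((m:ℂ)+2) * z ^ (m+1))) z := by
      have := (hasDerivAt_pow (m+2) z).const_mul c
      simpa [Nat.add_sub_cancel] using this
    have h3 : HasDerivAt (fun z : ℂ => z ^ (m+3) * τ z)
        ((((m:ℂ)+3) * z ^ (m+2)) * τ z + z ^ (m+3) * deriv τ z) z := by
      have hτd : HasDerivAt τ (deriv τ z) z := (hτB z hz).differentiableAt.hasDerivAt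
      have := (hasDerivAt_pow (m+3) z).fun_mul hτd
      simpa [Nat.add_sub_cancel] using this
    have hF : HasDerivAt (fun z : ℂ => z + c * z ^ (m+2) + z ^ (m+3) * τ z) (D z) z := by
      have h := (h1.fun_add h2).fun_add h3
      refine h.congr_deriv ?_
      rw [hDdef]
      push_cast
      ring
    exact hF.congr_of_eventuallyEq <|
      Filter.eventuallyEq_of_mem (hBopen.mem_nhds hz) hexp'
  have hDσ : ∀ z ∈ ball (0:ℂ) r, deriv σ z = D z := fun z hz => (hσD z hz).deriv
  have hτd : DifferentiableOn ℂ τ (ball (0:ℂ) r) := hτB.differentiableOn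
  have hτ'd : DifferentiableOn ℂ (deriv τ) (ball (0:ℂ) r) := hτ'.differentiableOn
  have hu_an : AnalyticOnNhd ℂ u (ball (0:ℂ) r) := by
    rw [hu]
    refine DifferentiableOn.analyticOnNhd ?_ hBopen
    fun_prop
  have hD_an : AnalyticOnNhd ℂ D (ball (0:ℂ) r) := by
    rw [hDdef]
    refine DifferentiableOn.analyticOnNhd ?_ hBopen
    fun_prop
  have hM_an : AnalyticOnNhd ℂ M (ball (0:ℂ) r) := by
    rw [hM]
    refine DifferentiableOn.analyticOnNhd ?_ hBopen
    fun_prop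
  obtain ⟨S, hS⟩ : ∃ S : Set ℂ, S = (ball (0:ℂ) r ∩ u ⁻¹' {0}ᶜ) ∩ D ⁻¹' {0}ᶜ := ⟨_, rfl⟩
  have hmem : ∀ z : ℂ, z ∈ S ↔ z ∈ ball (0:ℂ) r ∧ u z ≠ 0 ∧ D z ≠ 0 := by
    intro z
    rw [hS]
    simp [and_assoc]
  have hSsub : S ⊆ ball (0:ℂ) r := fun z hz => ((hmem z).mp hz).1
  have hTopen : IsOpen (ball (0:ℂ) r ∩ u ⁻¹' {0}ᶜ) :=
    ContinuousOn.isOpen_inter_preimage hu_an.continuousOn hBopen isOpen_compl_singleton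
  have hSopen : IsOpen S := by
    rw [hS]
    exact ContinuousOn.isOpen_inter_preimage
      (hD_an.continuousOn.mono (fun z hz => hz.1)) hTopen isOpen_compl_singleton
  have hu0 : u 0 = 1 := by simp [hu]
  have hD0 : D 0 = 1 := by simp [hDdef]
  have hS0 : (0:ℂ) ∈ S := (hmem 0).mpr ⟨hB0, by simp [hu0], by simp [hD0]⟩
  have hSnhds : S ∈ nhds (0:ℂ) := hSopen.mem_nhds hS0
  have huS : ∀ z ∈ S, u z ≠ 0 := fun z hz => ((hmem z).mp hz).2.1
  have hDS : ∀ z ∈ S, D z ≠ 0 := fun z hz => ((hmem z).mp hz).2.2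
  have hg_an : AnalyticOnNhd ℂ g S := by
    rw [hg]
    intro z hz
    exact (hM_an z (hSsub hz)).div
      (((hu_an z (hSsub hz)).pow _).mul (hD_an z (hSsub hz)))
      (mul_ne_zero (pow_ne_zero _ (huS z hz)) (hDS z hz))
  -- key scalar identity
  have hck : c * ((m:ℂ)+1) = κ := by rw [hc]; field_simp
  have key : ∀ z ∈ S, z ≠ 0 →
      z⁻¹ + κ * z ^ m = ((σ z)⁻¹ + g z * σ z ^ (m+1)) * D z := by
    intro z hz hz0
    have hu' := huS z hz
    have hD' := hDS z hz
    rw [hσeq z (hSsub hz)]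
    have hP : u z + κ * z ^ (m+1) * u z = D z + z ^ (m+2) * M z := by
      rw [hu, hDdef, hM]
      simp only
      linear_combination (-(z : ℂ) ^ (m+1)) * hck
    have e1 : (z * u z) * (z⁻¹ + κ * z ^ m) = u z + κ * z ^ (m+1) * u z := by
      field_simp
      ring
    have e2 : (z * u z) * (((z * u z)⁻¹ + g z * (z * u z) ^ (m+1)) * D z)
        = D z + z ^ (m+2) * M z := by
      rw [hg]
      field_simp
      ring
    exact mul_left_cancel₀ (mul_ne_zero hz0 hu') (by rw [e1, e2, hP])
  constructor
  · exact ⟨S, hSnhds, g, hg_an, fun z hz hz0 => by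
      rw [hDσ z (hSsub hz)]; exact key z hz hz0⟩
  · intro A E hE
    obtain ⟨V', hV'sub, hV'open, hV'0⟩ := _root_.mem_nhds_iff.mp hV
    have hφV' : AnalyticOnNhd ℂ φ V' := hφa.mono hV'sub
    set W : Set ℂ := V' ∩ φ ⁻¹' S with hW
    have hWopen : IsOpen W :=
      ContinuousOn.isOpen_inter_preimage hφV'.continuousOn hV'open hSopen
    have hW0 : (0:ℂ) ∈ W := ⟨hV'0, by simp [hφ0, hS0]⟩
    have hWsubV : W ⊆ V := fun w hw => hV'sub hw.1
    have hφS : ∀ w ∈ W, φ w ∈ S := fun w hw => hw.2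
    set e : ℂ → ℂ := fun w => deriv φ w * ((u (φ w))⁻¹) ^ (m+1) with he
    refine ⟨W, hWopen.mem_nhds hW0, fun w => g (φ w) • A + e w • E (φ w), ?_, ?_⟩
    · intro i j
      intro w hw
      have hφw : AnalyticAt ℂ φ w := hφa w (hWsubV hw)
      have h1 : AnalyticAt ℂ (fun w => g (φ w)) w := (hg_an (φ w) (hφS w hw)).comp hφw
      have h2 : AnalyticAt ℂ (deriv φ) w := (hφV'.deriv) w hw.1
      have h3 : AnalyticAt ℂ (fun w => (u (φ w))⁻¹) w :=
        ((hu_an (φ w) (hSsub (hφS w hw))).comp hφw).inv (huS _ (hφS w hw))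
      have h4 : AnalyticAt ℂ (fun w => E (φ w) i j) w :=
        (hE i j (φ w) (hrU (hSsub (hφS w hw)))).comp hφw
      have : AnalyticAt ℂ
          (fun w => g (φ w) * A i j + (deriv φ w * ((u (φ w))⁻¹) ^ (m+1)) * E (φ w) i j) w :=
        (h1.mul analyticAt_const).add ((h2.mul (h3.pow _)).mul h4)
      refine this.congr ?_
      filter_upwards with x
      simp [he, Matrix.add_apply, Matrix.smul_apply, smul_eq_mul]
    · intro w hw hw0
      have hwV : w ∈ V := hWsubV hw
      have hφwS : φ w ∈ S := hφS w hw
      have hφwB : φ w ∈ ball (0:ℂ) r := hSsub hφwS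
      have hσφ : σ (φ w) = w := hinv w hwV
      have hφw0 : φ w ≠ 0 := by
        intro h
        exact hw0 (by rw [← hσφ, h, hσ0])
      -- chain rule
      have hdφ : HasDerivAt φ (deriv φ w) w := (hφa w hwV).differentiableAt.hasDerivAt
      have hdσ : HasDerivAt σ (D (φ w)) (φ w) := hσD _ hφwB
      have hcomp : HasDerivAt (σ ∘ φ) (D (φ w) * deriv φ w) w := hdσ.comp w hdφ
      have heq : σ ∘ φ =ᶠ[nhds w] id := by
        filter_upwards [hWopen.mem_nhds hw] with x hx
        exact hinv x (hWsubV hx)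
      have hchain : D (φ w) * deriv φ w = 1 :=
        (hcomp.congr_of_eventuallyEq heq.symm).unique (hasDerivAt_id w)
      have h1 : φ w * u (φ w) = w := by rw [← hσeq _ hφwB, hσφ]
      have h2 : φ w = w * (u (φ w))⁻¹ := (eq_mul_inv_iff_mul_eq₀ (huS _ hφwS)).mpr h1
      have hpow : φ w ^ (m+1) = w ^ (m+1) * ((u (φ w))⁻¹) ^ (m+1) := by
        nth_rewrite 1 [h2]
        rw [mul_pow]
      have hkey := key (φ w) hφwS hφw0
      rw [hσφ] at hkey
      ext i j
      simp only [Matrix.add_apply, Matrix.smul_apply, smul_eq_mul, he]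
      rw [hkey, hpow]
      linear_combination (((w:ℂ)⁻¹ + g (φ w) * w ^ (m+1)) * A i j) * hchain
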